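/- arXiv:2510.12311 — 4 statements merged into one kernel-verified Lean document; each statement's English description precedes it below -/
import Mathlib

section
/- Let M, N ≥ 1 be integers and let φ_1, …, φ_M : ℝ^{d_θ} × ℝ^{d_x} → ℝ each be μ-strongly convex on ℝ^{d_θ} × ℝ^{d_x} (jointly in both arguments), for some μ > 0. Define Φ : ℝ^{d_θ} × (ℝ^{d_x})^{M×N} → ℝ by Φ(θ, z^{1:M,1:N}) = Σ_{m=1}^M Σ_{n=1}^N φ_m(θ, √(MN)·z^{m,n}). Then Φ is (MNμ)-strongly convex on ℝ^{d_θ} × (ℝ^{d_x})^{M×N}. -/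
open Real

/-- Embed a pair (θ, x) into the Euclidean space indexed by the sum type,
carrying the Euclidean norm ‖(θ,x)‖² = ‖θ‖² + ‖x‖². -/
noncomputable def sumPair {dθ dx : ℕ} (θ : EuclideanSpace ℝ (Fin dθ))
    (x : EuclideanSpace ℝ (Fin dx)) : EuclideanSpace ℝ (Fin dθ ⊕ Fin dx) :=
  (WithLp.equiv 2 _).symm (Sum.elim (fun i => θ i) (fun j => x j))

/-- Extract the θ-component of a point of ℝ^{d_θ} × (ℝ^{d_x})^{M×N}. -/
noncomputable def thetaPart {dθ dx M N : ℕ}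
    (q : EuclideanSpace ℝ (Fin dθ ⊕ (Fin M × Fin N) × Fin dx)) :
    EuclideanSpace ℝ (Fin dθ) :=
  (WithLp.equiv 2 _).symm (fun i => q (Sum.inl i))

/-- Extract the (m,n)-th latent block z^{m,n} ∈ ℝ^{d_x}. -/
noncomputable def zPart {dθ dx M N : ℕ}
    (q : EuclideanSpace ℝ (Fin dθ ⊕ (Fin M × Fin N) × Fin dx)) (m : Fin M) (n : Fin N) :
    EuclideanSpace ℝ (Fin dx) :=
  (WithLp.equiv 2 _).symm (fun j => q (Sum.inr ((m, n), j)))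

/-- Φ(θ, z^{1:M,1:N}) = Σ_m Σ_n φ_m(θ, √(MN) z^{m,n}). -/
noncomputable def bigPhi {dθ dx M N : ℕ}
    (φ : Fin M → EuclideanSpace ℝ (Fin dθ ⊕ Fin dx) → ℝ)
    (q : EuclideanSpace ℝ (Fin dθ ⊕ (Fin M × Fin N) × Fin dx)) : ℝ :=
  ∑ m : Fin M, ∑ n : Fin N,
    φ m (sumPair (thetaPart q) (Real.sqrt (M * N) • zPart q m n))

/-- Auxiliary: sums of convex functions are convex. -/
lemma convexOn_finset_sum' {E : Type*} [AddCommMonoid E] [Module ℝ E] {ι : Type*}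
    (t : Finset ι) (f : ι → E → ℝ)
    (h : ∀ i ∈ t, ConvexOn ℝ Set.univ (f i)) :
    ConvexOn ℝ Set.univ (fun x => ∑ i ∈ t, f i x) := by
  induction t using Finset.cons_induction with
  | empty => simpa using convexOn_const (0:ℝ) convex_univ
  | cons a t ha ih =>
    simp only [Finset.sum_cons]
    exact (h a (Finset.mem_cons_self a t)).add (ih fun i hi => h i (Finset.mem_cons_of_mem hi))

/-- The linear map q ↦ (θ(q), c · z^{m,n}(q)). -/
noncomputable def Lmap {dθ dx M N : ℕ} (c : ℝ) (m : Fin M) (n : Fin N) :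
    EuclideanSpace ℝ (Fin dθ ⊕ (Fin M × Fin N) × Fin dx) →ₗ[ℝ]
      EuclideanSpace ℝ (Fin dθ ⊕ Fin dx) where
  toFun q := sumPair (thetaPart q) (c • zPart q m n)
  map_add' p q := by
    ext i
    cases i <;>
      simp [sumPair, thetaPart, zPart, WithLp.equiv_symm_apply, PiLp.toLp_apply, PiLp.add_apply,
        PiLp.smul_apply, mul_add]
  map_smul' r q := by
    ext i
    cases i <;>
      (simp [sumPair, thetaPart, zPart, WithLp.equiv_symm_apply, PiLp.toLp_apply, PiLp.smul_apply,
        smul_eq_mul]; try ring)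

lemma nsq {ι : Type*} [Fintype ι] (x : EuclideanSpace ℝ ι) : ‖x‖^2 = ∑ i, x i ^2 := by
  rw [EuclideanSpace.norm_eq, Real.sq_sqrt (by positivity)]
  simp [Real.norm_eq_abs, sq_abs]

lemma sumPair_nsq {dθ dx : ℕ} (θ : EuclideanSpace ℝ (Fin dθ)) (x : EuclideanSpace ℝ (Fin dx)) :
    ‖sumPair θ x‖^2 = ‖θ‖^2 + ‖x‖^2 := by
  simp [nsq, sumPair, WithLp.equiv_symm_apply, PiLp.toLp_apply, Fintype.sum_sum_type]

lemma q_nsq {dθ dx M N : ℕ} (q : EuclideanSpace ℝ (Fin dθ ⊕ (Fin M × Fin N) × Fin dx)) :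
    ‖q‖^2 = ‖thetaPart q‖^2 + ∑ m : Fin M, ∑ n : Fin N, ‖zPart q m n‖^2 := by
  simp [nsq, thetaPart, zPart, WithLp.equiv_symm_apply, PiLp.toLp_apply, Fintype.sum_sum_type,
    Fintype.sum_prod_type]

/-- If each φ_m is μ-strongly convex jointly in (θ, x), then
Φ(θ, z) = Σ_{m,n} φ_m(θ, √(MN) z^{m,n}) is (MNμ)-strongly convex. -/
theorem stmt0 (dθ dx M N : ℕ) (hM : 1 ≤ M) (hN : 1 ≤ N) (μ : ℝ) (hμ : 0 < μ)
    (φ : Fin M → EuclideanSpace ℝ (Fin dθ ⊕ Fin dx) → ℝ)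
    (hφ : ∀ m, ConvexOn ℝ Set.univ
      (fun p : EuclideanSpace ℝ (Fin dθ ⊕ Fin dx) => φ m p - μ / 2 * ‖p‖ ^ 2)) :
    ConvexOn ℝ Set.univ
      (fun q : EuclideanSpace ℝ (Fin dθ ⊕ (Fin M × Fin N) × Fin dx) =>
        bigPhi φ q - (M * N * μ) / 2 * ‖q‖ ^ 2) := by
  set c : ℝ := Real.sqrt (M * N) with hc
  have hc2 : c ^ 2 = (M : ℝ) * N := Real.sq_sqrt (by positivity)
  have key : (fun q : EuclideanSpace ℝ (Fin dθ ⊕ (Fin M × Fin N) × Fin dx) =>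
        bigPhi φ q - (M * N * μ) / 2 * ‖q‖ ^ 2) =
      fun q => ∑ m : Fin M, ∑ n : Fin N,
        (φ m (Lmap c m n q) - μ / 2 * ‖Lmap c m n q‖ ^ 2) := by
    funext q
    have hL : ∀ (m : Fin M) (n : Fin N),
        ‖(Lmap (dθ := dθ) c m n q)‖ ^ 2
          = ‖thetaPart q‖ ^ 2 + ((M : ℝ) * N) * ‖zPart q m n‖ ^ 2 := by
      intro m n
      have : (Lmap (dθ := dθ) c m n q) = sumPair (thetaPart q) (c • zPart q m n) := rfl
      rw [this, sumPair_nsq, norm_smul, mul_pow, Real.norm_eq_abs, sq_abs, hc2]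
    simp only [Finset.sum_sub_distrib]
    have h1 : bigPhi φ q = ∑ m : Fin M, ∑ n : Fin N, φ m (Lmap c m n q) := rfl
    rw [h1]
    congr 1
    have h2 : ∀ (m : Fin M) (n : Fin N), μ / 2 * ‖(Lmap (dθ := dθ) c m n) q‖ ^ 2
        = μ / 2 * ‖thetaPart q‖ ^ 2 + μ / 2 * ((M : ℝ) * N) * ‖zPart q m n‖ ^ 2 :=
      fun m n => by rw [hL]; ring
    simp only [h2, Finset.sum_add_distrib, Finset.sum_const, Finset.card_univ,
      Fintype.card_fin, nsmul_eq_mul, ← Finset.mul_sum]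
    rw [q_nsq q]
    ring
  rw [key]
  apply convexOn_finset_sum'
  intro m _
  apply convexOn_finset_sum'
  intro n _
  have := (hφ m).comp_linearMap (Lmap (dθ := dθ) (dx := dx) c m n)
  exact this
end

section
/- Let M, N ≥ 1 be integers and let φ_1, …, φ_M : ℝ^{d_θ} × ℝ^{d_x} → ℝ each be differentiable with L-Lipschitz gradient on ℝ^{d_θ} × ℝ^{d_x}, for some L > 0. Define Φ : ℝ^{d_θ} × (ℝ^{d_x})^{M×N} → ℝ by Φ(θ, z^{1:M,1:N}) = Σ_{m=1}^M Σ_{n=1}^N φ_m(θ, √(MN)·z^{m,n}). Then Φ is differentiable and its gradient is (MNL)-Lipschitz on ℝ^{d_θ} × (ℝ^{d_x})^{M×N}. -/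
open Real

section Aux
open Finset InnerProductSpace
variable {dθ dx M N : ℕ}


noncomputable def Amn (dθ dx : ℕ) {M N : ℕ} (m : Fin M) (n : Fin N) :
    EuclideanSpace ℝ (Fin dθ ⊕ (Fin M × Fin N) × Fin dx) →L[ℝ] EuclideanSpace ℝ (Fin dθ ⊕ Fin dx) :=
  LinearMap.toContinuousLinearMap
  { toFun := fun q => (WithLp.equiv 2 _).symm
      (Sum.elim (fun i => q (Sum.inl i)) (fun j => Real.sqrt (M * N) * q (Sum.inr ((m, n), j))))
    map_add' := by
      intro q q'
      apply (WithLp.equiv 2 _).injective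
      ext k
      cases k <;> simp [mul_add]
    map_smul' := by
      intro c q
      apply (WithLp.equiv 2 _).injective
      ext k
      cases k
      · simp
      · simp; ring }

@[simp] lemma Amn_inl (m : Fin M) (n : Fin N)
    (q : EuclideanSpace ℝ (Fin dθ ⊕ (Fin M × Fin N) × Fin dx)) (i : Fin dθ) :
    Amn dθ dx m n q (Sum.inl i) = q (Sum.inl i) := rfl

@[simp] lemma Amn_inr (m : Fin M) (n : Fin N)
    (q : EuclideanSpace ℝ (Fin dθ ⊕ (Fin M × Fin N) × Fin dx)) (j : Fin dx) :
    Amn dθ dx m n q (Sum.inr j) = Real.sqrt (M * N) * q (Sum.inr ((m, n), j)) := rfl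

noncomputable def Gmap (φ : Fin M → EuclideanSpace ℝ (Fin dθ ⊕ Fin dx) → ℝ)
    (q : EuclideanSpace ℝ (Fin dθ ⊕ (Fin M × Fin N) × Fin dx)) :
    EuclideanSpace ℝ (Fin dθ ⊕ (Fin M × Fin N) × Fin dx) :=
  (WithLp.equiv 2 _).symm (Sum.elim
    (fun i => ∑ m : Fin M, ∑ n : Fin N, gradient (φ m) (Amn dθ dx m n q) (Sum.inl i))
    (fun p => Real.sqrt (M * N) * gradient (φ p.1.1) (Amn dθ dx p.1.1 p.1.2 q) (Sum.inr p.2)))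

@[simp] lemma Gmap_inl (φ : Fin M → EuclideanSpace ℝ (Fin dθ ⊕ Fin dx) → ℝ) (q) (i : Fin dθ) :
    Gmap φ q (Sum.inl i) = ∑ m : Fin M, ∑ n : Fin N, gradient (φ m) (Amn dθ dx m n q) (Sum.inl i) := rfl

@[simp] lemma Gmap_inr (φ : Fin M → EuclideanSpace ℝ (Fin dθ ⊕ Fin dx) → ℝ) (q)
    (m : Fin M) (n : Fin N) (j : Fin dx) :
    Gmap φ q (Sum.inr ((m, n), j)) = Real.sqrt (M * N) * gradient (φ m) (Amn dθ dx m n q) (Sum.inr j) := rfl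

lemma fderiv_eq_inner_gradient (f : EuclideanSpace ℝ (Fin dθ ⊕ Fin dx) → ℝ) (p w) :
    fderiv ℝ f p w = ⟪gradient f p, w⟫_ℝ := by
  rw [gradient, toDual_symm_apply]

lemma hasGradient_bigPhi (φ : Fin M → EuclideanSpace ℝ (Fin dθ ⊕ Fin dx) → ℝ)
    (hdiff : ∀ m, Differentiable ℝ (φ m))
    (q : EuclideanSpace ℝ (Fin dθ ⊕ (Fin M × Fin N) × Fin dx)) :
    HasGradientAt (fun q => ∑ m : Fin M, ∑ n : Fin N, φ m (Amn dθ dx m n q)) (Gmap φ q) q := by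
  have hterm : ∀ m n, HasFDerivAt (fun q => φ m (Amn dθ dx m n q))
      ((fderiv ℝ (φ m) (Amn dθ dx m n q)).comp (Amn dθ dx m n)) q :=
    fun m n => ((hdiff m).differentiableAt.hasFDerivAt).comp q (Amn dθ dx m n).hasFDerivAt
  have hsum : HasFDerivAt (fun q => ∑ m : Fin M, ∑ n : Fin N, φ m (Amn dθ dx m n q))
      (∑ m : Fin M, ∑ n : Fin N, (fderiv ℝ (φ m) (Amn dθ dx m n q)).comp (Amn dθ dx m n)) q := by
    apply HasFDerivAt.fun_sum
    intro m _
    exact HasFDerivAt.fun_sum (fun n _ => hterm m n)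
  have key : (toDual ℝ (EuclideanSpace ℝ (Fin dθ ⊕ (Fin M × Fin N) × Fin dx))) (Gmap φ q)
      = ∑ m : Fin M, ∑ n : Fin N, (fderiv ℝ (φ m) (Amn dθ dx m n q)).comp (Amn dθ dx m n) := by
    ext v
    simp only [ContinuousLinearMap.sum_apply, ContinuousLinearMap.comp_apply,
      fderiv_eq_inner_gradient, toDual_apply_apply, PiLp.inner_apply, RCLike.inner_apply, conj_trivial,
      Fintype.sum_sum_type, Fintype.sum_prod_type, Amn_inl, Amn_inr, Gmap_inl, Gmap_inr]
    simp only [Finset.sum_add_distrib, Finset.sum_mul]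
    congr 1
    · simp only [Finset.mul_sum]; rw [Finset.sum_comm]
      refine Finset.sum_congr rfl fun m _ => ?_
      rw [Finset.sum_comm]
    · refine Finset.sum_congr rfl fun m _ => Finset.sum_congr rfl fun n _ =>
        Finset.sum_congr rfl fun j _ => ?_
      ring
  rw [HasGradientAt, HasGradientAtFilter, key]
  exact hsum

lemma norm_sq_eucl {ι : Type*} [Fintype ι] (x : EuclideanSpace ℝ ι) :
    ‖x‖ ^ 2 = ∑ i, x i ^ 2 := by
  rw [EuclideanSpace.norm_eq, Real.sq_sqrt (by positivity)]
  simp [sq_abs]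

lemma lip_G (φ : Fin M → EuclideanSpace ℝ (Fin dθ ⊕ Fin dx) → ℝ) {L : ℝ} (hL : 0 ≤ L)
    (hlip : ∀ m, ∀ p q : EuclideanSpace ℝ (Fin dθ ⊕ Fin dx),
      ‖gradient (φ m) p - gradient (φ m) q‖ ≤ L * ‖p - q‖)
    (q q' : EuclideanSpace ℝ (Fin dθ ⊕ (Fin M × Fin N) × Fin dx)) :
    ‖Gmap φ q - Gmap φ q'‖ ≤ (M * N * L) * ‖q - q'‖ := by
  set c : ℝ := (M : ℝ) * N with hc
  have hc0 : 0 ≤ c := by positivity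
  set w : Fin M × Fin N → EuclideanSpace ℝ (Fin dθ ⊕ Fin dx) :=
    fun p => gradient (φ p.1) (Amn dθ dx p.1 p.2 q) - gradient (φ p.1) (Amn dθ dx p.1 p.2 q') with hw
  have hsq : Real.sqrt c ^ 2 = c := Real.sq_sqrt hc0
  have stepA : ‖Gmap φ q - Gmap φ q'‖ ^ 2 =
      (∑ i : Fin dθ, (∑ p : Fin M × Fin N, w p (Sum.inl i)) ^ 2)
      + ∑ p : Fin M × Fin N, ∑ j : Fin dx, c * (w p (Sum.inr j)) ^ 2 := by
    rw [norm_sq_eucl, Fintype.sum_sum_type]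
    congr 1
    · refine Finset.sum_congr rfl fun i _ => ?_
      congr 1
      simp [w, Fintype.sum_prod_type, Finset.sum_sub_distrib]
    · rw [Fintype.sum_prod_type]
      refine Finset.sum_congr rfl fun p _ => Finset.sum_congr rfl fun j _ => ?_
      obtain ⟨m, n⟩ := p
      have : (Gmap φ q - Gmap φ q') (Sum.inr ((m, n), j))
          = Real.sqrt c * (w (m, n) (Sum.inr j)) := by
        simp only [w, PiLp.sub_apply, mul_sub, Gmap_inr, hc]
      rw [this, mul_pow, hsq]
  have cheb : ∀ i : Fin dθ, (∑ p : Fin M × Fin N, w p (Sum.inl i)) ^ 2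
      ≤ c * ∑ p : Fin M × Fin N, (w p (Sum.inl i)) ^ 2 := by
    intro i
    have h := sq_sum_le_card_mul_sum_sq (s := (Finset.univ : Finset (Fin M × Fin N)))
      (f := fun p => w p (Sum.inl i))
    simpa [hc] using h
  have stepB : ‖Gmap φ q - Gmap φ q'‖ ^ 2 ≤ c * ∑ p : Fin M × Fin N, ‖w p‖ ^ 2 := by
    rw [stepA]
    have hnw : ∑ p : Fin M × Fin N, ‖w p‖ ^ 2
        = ∑ p : Fin M × Fin N, (∑ i : Fin dθ, w p (Sum.inl i) ^ 2
            + ∑ j : Fin dx, w p (Sum.inr j) ^ 2) := by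
      refine Finset.sum_congr rfl fun p _ => ?_
      rw [norm_sq_eucl, Fintype.sum_sum_type]
    rw [hnw]
    have e1 : (∑ i : Fin dθ, c * ∑ p : Fin M × Fin N, w p (Sum.inl i) ^ 2)
        = c * ∑ p : Fin M × Fin N, ∑ i : Fin dθ, w p (Sum.inl i) ^ 2 := by
      rw [← Finset.mul_sum, Finset.sum_comm]
    have e2 : (∑ p : Fin M × Fin N, ∑ j : Fin dx, c * w p (Sum.inr j) ^ 2)
        = c * ∑ p : Fin M × Fin N, ∑ j : Fin dx, w p (Sum.inr j) ^ 2 := by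
      simp only [← Finset.mul_sum]
    calc (∑ i : Fin dθ, (∑ p : Fin M × Fin N, w p (Sum.inl i)) ^ 2)
          + ∑ p : Fin M × Fin N, ∑ j : Fin dx, c * (w p (Sum.inr j)) ^ 2
        ≤ (∑ i : Fin dθ, c * ∑ p : Fin M × Fin N, w p (Sum.inl i) ^ 2)
          + ∑ p : Fin M × Fin N, ∑ j : Fin dx, c * (w p (Sum.inr j)) ^ 2 := by
          exact add_le_add (Finset.sum_le_sum fun i _ => cheb i) le_rfl
      _ = c * ∑ p : Fin M × Fin N, (∑ i : Fin dθ, w p (Sum.inl i) ^ 2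
            + ∑ j : Fin dx, w p (Sum.inr j) ^ 2) := by
          rw [e1, e2, ← mul_add, ← Finset.sum_add_distrib]
  have stepC : ∀ p : Fin M × Fin N, ‖w p‖ ^ 2
      ≤ L ^ 2 * ‖Amn dθ dx p.1 p.2 q - Amn dθ dx p.1 p.2 q'‖ ^ 2 := by
    intro p
    have h := hlip p.1 (Amn dθ dx p.1 p.2 q) (Amn dθ dx p.1 p.2 q')
    have h2 := pow_le_pow_left₀ (norm_nonneg _) h 2
    rwa [mul_pow] at h2
  have stepD : ∀ p : Fin M × Fin N, ‖Amn dθ dx p.1 p.2 q - Amn dθ dx p.1 p.2 q'‖ ^ 2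
      = (∑ i : Fin dθ, ((q - q') (Sum.inl i)) ^ 2)
        + c * ∑ j : Fin dx, ((q - q') (Sum.inr (p, j))) ^ 2 := by
    intro p
    rw [← map_sub, norm_sq_eucl, Fintype.sum_sum_type]
    congr 1
    rw [Finset.mul_sum]
    refine Finset.sum_congr rfl fun j _ => ?_
    rw [Amn_inr, mul_pow, hsq]
  have hdelta : ‖q - q'‖ ^ 2 = (∑ i : Fin dθ, ((q - q') (Sum.inl i)) ^ 2)
      + ∑ p : Fin M × Fin N, ∑ j : Fin dx, ((q - q') (Sum.inr (p, j))) ^ 2 := by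
    rw [norm_sq_eucl, Fintype.sum_sum_type, Fintype.sum_prod_type]
  have stepE : ∑ p : Fin M × Fin N, ‖Amn dθ dx p.1 p.2 q - Amn dθ dx p.1 p.2 q'‖ ^ 2
      ≤ c * ‖q - q'‖ ^ 2 := by
    have : ∑ p : Fin M × Fin N, ‖Amn dθ dx p.1 p.2 q - Amn dθ dx p.1 p.2 q'‖ ^ 2
        = c * (∑ i : Fin dθ, ((q - q') (Sum.inl i)) ^ 2)
          + c * ∑ p : Fin M × Fin N, ∑ j : Fin dx, ((q - q') (Sum.inr (p, j))) ^ 2 := by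
      simp only [stepD]
      rw [Finset.sum_add_distrib, Finset.sum_const, ← Finset.mul_sum]
      congr 1
      simp [hc, nsmul_eq_mul, mul_comm]
    rw [this, hdelta, mul_add]
  have hsqle : ‖Gmap φ q - Gmap φ q'‖ ^ 2 ≤ ((M * N * L) * ‖q - q'‖) ^ 2 := by
    calc ‖Gmap φ q - Gmap φ q'‖ ^ 2 ≤ c * ∑ p : Fin M × Fin N, ‖w p‖ ^ 2 := stepB
      _ ≤ c * ∑ p : Fin M × Fin N,
            L ^ 2 * ‖Amn dθ dx p.1 p.2 q - Amn dθ dx p.1 p.2 q'‖ ^ 2 := by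
          exact mul_le_mul_of_nonneg_left (Finset.sum_le_sum fun p _ => stepC p) hc0
      _ = c * L ^ 2 * ∑ p : Fin M × Fin N,
            ‖Amn dθ dx p.1 p.2 q - Amn dθ dx p.1 p.2 q'‖ ^ 2 := by
          rw [← Finset.mul_sum, hc]; ring
      _ ≤ c * L ^ 2 * (c * ‖q - q'‖ ^ 2) := by
          exact mul_le_mul_of_nonneg_left stepE (by positivity)
      _ = ((M * N * L) * ‖q - q'‖) ^ 2 := by rw [hc]; ring
  have h1 := Real.sqrt_le_sqrt hsqle
  rwa [Real.sqrt_sq (norm_nonneg _), Real.sqrt_sq (by positivity)] at h1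

lemma bigPhi_eq (φ : Fin M → EuclideanSpace ℝ (Fin dθ ⊕ Fin dx) → ℝ) :
    (bigPhi φ : EuclideanSpace ℝ (Fin dθ ⊕ (Fin M × Fin N) × Fin dx) → ℝ)
      = fun q => ∑ m : Fin M, ∑ n : Fin N, φ m (Amn dθ dx m n q) := by
  funext q
  unfold bigPhi
  refine Finset.sum_congr rfl fun m _ => Finset.sum_congr rfl fun n _ => ?_
  have : sumPair (thetaPart q) (Real.sqrt (M * N) • zPart q m n) = Amn dθ dx m n q := by
    apply (WithLp.equiv 2 _).injective
    ext k
    cases k <;> simp [sumPair, thetaPart, zPart, Amn]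
  rw [this]

end Aux

/-- If each φ_m is differentiable with L-Lipschitz gradient jointly in (θ, x), then
Φ(θ, z) = Σ_{m,n} φ_m(θ, √(MN) z^{m,n}) is differentiable with (MNL)-Lipschitz gradient. -/
theorem stmt1 (dθ dx M N : ℕ) (hM : 1 ≤ M) (hN : 1 ≤ N) (L : ℝ) (hL : 0 < L)
    (φ : Fin M → EuclideanSpace ℝ (Fin dθ ⊕ Fin dx) → ℝ)
    (hdiff : ∀ m, Differentiable ℝ (φ m))
    (hlip : ∀ m, ∀ p q : EuclideanSpace ℝ (Fin dθ ⊕ Fin dx),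
      ‖gradient (φ m) p - gradient (φ m) q‖ ≤ L * ‖p - q‖) :
    Differentiable ℝ (bigPhi φ : EuclideanSpace ℝ (Fin dθ ⊕ (Fin M × Fin N) × Fin dx) → ℝ) ∧
      ∀ q q' : EuclideanSpace ℝ (Fin dθ ⊕ (Fin M × Fin N) × Fin dx),
        ‖gradient (bigPhi φ) q - gradient (bigPhi φ) q'‖ ≤ (M * N * L) * ‖q - q'‖ := by
  constructor
  · rw [bigPhi_eq]
    exact fun q => (hasGradient_bigPhi φ hdiff q).differentiableAt
  · intro q q'
    have hg : ∀ r : EuclideanSpace ℝ (Fin dθ ⊕ (Fin M × Fin N) × Fin dx), gradient (bigPhi φ) r = Gmap φ r := by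
      intro r
      rw [bigPhi_eq]
      exact (hasGradient_bigPhi φ hdiff r).gradient
    rw [hg, hg]
    exact lip_G φ hL.le hlip q q'
end

section
/- Let V : ℝ^d → ℝ be continuous and μ-strongly convex for some μ > 0, let x* ∈ ℝ^d be its (unique) global minimizer, and let π be the probability measure on ℝ^d with density proportional to exp(−V) with respect to Lebesgue measure (exp(−V) is integrable because V is strongly convex and continuous). Then ∫_{ℝ^d} ‖x − x*‖² dπ(x) ≤ d/μ. Equivalently, the Wasserstein-2 distance between the Dirac mass at x* and π is at most √(d/μ). -/
open Real MeasureTheory Set Metric Filter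


-- Claim A: monotonicity of ψ = w - μ/2 r² on (0,∞)
lemma psi_mono (μ : ℝ) (hμ : 0 < μ) (w : ℝ → ℝ)
    (hconv : ConvexOn ℝ Set.univ (fun r => w r - μ / 2 * r ^ 2))
    (hmin : ∀ r, w 0 ≤ w r) {s t : ℝ} (hs : 0 < s) (hst : s ≤ t) :
    w s - μ / 2 * s ^ 2 ≤ w t - μ / 2 * t ^ 2 := by
  set ψ : ℝ → ℝ := fun r => w r - μ / 2 * r ^ 2 with hψ
  rcases eq_or_lt_of_le hst with rfl | hlt
  · exact le_refl _
  -- w is convex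
  have hwconv : ConvexOn ℝ Set.univ w := by
    have h2 : ConvexOn ℝ Set.univ (fun r : ℝ => μ / 2 * r ^ 2) :=
      (Even.convexOn_pow even_two).smul (by positivity)
    have h3 := hconv.add h2
    have h4 : w = (ψ + fun r : ℝ => μ/2 * r^2) := funext fun r => by simp [hψ]
    rw [h4]; exact h3
  -- w monotone on [0, ∞)
  have hwmono : ∀ a b : ℝ, 0 ≤ a → a ≤ b → w a ≤ w b := by
    intro p q hp hpq
    rcases eq_or_lt_of_le hpq with rfl | hpq
    · exact le_refl _
    have hq : 0 < q := lt_of_le_of_lt hp hpq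
    have key := hwconv.2 (mem_univ (0:ℝ)) (mem_univ q)
      (show (0:ℝ) ≤ 1 - p/q by rw [sub_nonneg]; exact div_le_one_of_le₀ hpq.le hq.le)
      (show (0:ℝ) ≤ p/q by positivity) (show (1 - p/q) + p/q = 1 by ring)
    simp only [smul_eq_mul, mul_zero, zero_add] at key
    have h5 : (1 - p/q) * w 0 + p/q * w q ≤ (1-p/q) * w q + p/q * w q := by
      have h0q := hmin q
      nlinarith [div_le_one_of_le₀ hpq.le hq.le, div_nonneg hp hq.le]
    calc w p = w ((p/q) * q) := by rw [div_mul_cancel₀]; exact hq.ne'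
    _ ≤ (1 - p/q) * w 0 + p/q * w q := key
    _ ≤ w q := by linarith
  -- slope chain
  have key : ∀ ε ∈ Ioo (0:ℝ) s, -(3/4*μ*ε)*(t-s) ≤ ψ t - ψ s := by
    intro ε hε
    have h1 : (ψ ε - ψ (ε/2)) / (ε - ε/2) ≤ (ψ s - ψ ε) / (s - ε) :=
      hconv.slope_mono_adjacent (mem_univ (ε/2)) (mem_univ s)
        (show ε/2 < ε by linarith [hε.1]) hε.2
    have h2 : (ψ s - ψ ε) / (s - ε) ≤ (ψ t - ψ s) / (t - s) :=
      hconv.slope_mono_adjacent (mem_univ ε) (mem_univ t) hε.2 hlt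
    have hslope1 : -(3/4*μ*ε) ≤ (ψ ε - ψ (ε/2)) / (ε - ε/2) := by
      rw [le_div_iff₀ (by linarith [hε.1] : (0:ℝ) < ε - ε/2)]
      have hw : w (ε/2) ≤ w ε := hwmono _ _ (by linarith [hε.1]) (by linarith [hε.1])
      simp only [hψ]
      nlinarith [hε.1, hμ]
    have hslope2 : -(3/4*μ*ε) ≤ (ψ t - ψ s) / (t - s) := le_trans hslope1 (le_trans h1 h2)
    rw [le_div_iff₀ (by linarith : (0:ℝ) < t - s)] at hslope2
    linarith
  have hlim : Tendsto (fun ε : ℝ => -(3/4*μ*ε)*(t-s)) (nhdsWithin 0 (Ioi 0)) (nhds 0) := by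
    have : Tendsto (fun ε : ℝ => -(3/4*μ*ε)*(t-s)) (nhds 0) (nhds 0) := by
      have hc : Continuous (fun ε : ℝ => -(3/4*μ*ε)*(t-s)) := by continuity
      simpa using hc.tendsto 0
    exact this.mono_left nhdsWithin_le_nhds
  have h0 : (0:ℝ) ≤ ψ t - ψ s := by
    refine le_of_tendsto hlim ?_
    filter_upwards [Ioo_mem_nhdsGT_of_mem (Set.mem_Ico.mpr ⟨le_refl 0, hs⟩)] with ε hε
    exact key ε hε
  have : ψ s ≤ ψ t := by linarith
  simpa [hψ] using this

lemma integrableOn_pow_exp (k : ℕ) {b : ℝ} (hb : 0 < b) :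
    IntegrableOn (fun r : ℝ => r ^ k * exp (-b * r ^ 2)) (Ioi 0) := by
  have h := integrableOn_rpow_mul_exp_neg_mul_sq hb
    (s := (k : ℝ)) (lt_of_lt_of_le neg_one_lt_zero (Nat.cast_nonneg k))
  simpa [Real.rpow_natCast] using h

lemma oneDim_integrable (k : ℕ) {μ : ℝ} (hμ : 0 < μ) (w : ℝ → ℝ) (hw : Continuous w)
    (hgrow : ∀ r : ℝ, w 0 + μ / 2 * r ^ 2 ≤ w r) :
    IntegrableOn (fun r : ℝ => r ^ k * exp (-(w r))) (Ioi 0) := by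
  have hmaj : IntegrableOn (fun r : ℝ => exp (-(w 0)) * (r ^ k * exp (-(μ/2) * r ^ 2)))
      (Ioi 0) := (integrableOn_pow_exp k (by positivity)).const_mul _
  refine Integrable.mono' hmaj ?_ ?_
  · exact ((continuous_pow k).mul (Real.continuous_exp.comp hw.neg)).aestronglyMeasurable
  · filter_upwards [ae_restrict_mem measurableSet_Ioi] with r hr
    have h1 : (0:ℝ) ≤ r := le_of_lt hr
    have h2 : exp (-(w r)) ≤ exp (-(w 0)) * exp (-(μ/2) * r ^ 2) := by
      rw [← Real.exp_add]
      exact Real.exp_le_exp.2 (by linarith [hgrow r])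
    rw [Real.norm_eq_abs, abs_of_nonneg (by positivity)]
    calc r ^ k * exp (-(w r)) ≤ r ^ k * (exp (-(w 0)) * exp (-(μ/2) * r ^ 2)) := by
          exact mul_le_mul_of_nonneg_left h2 (by positivity)
    _ = exp (-(w 0)) * (r ^ k * exp (-(μ/2) * r ^ 2)) := by ring

lemma gauss_moment (d : ℕ) (hd : 1 ≤ d) {μ : ℝ} (hμ : 0 < μ) :
    ∫ r in Ioi (0:ℝ), ((d:ℝ) * r ^ (d-1) - μ * r ^ (d+1)) * exp (-(μ/2) * r ^ 2) = 0 := by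
  obtain ⟨m, rfl⟩ : ∃ m, d = m + 1 := ⟨d - 1, (Nat.succ_pred_eq_of_pos hd).symm⟩
  have hderiv : ∀ x ∈ Ici (0:ℝ), HasDerivAt (fun r : ℝ => r ^ (m+1) * exp (-(μ/2) * r ^ 2))
      ((((m:ℝ)+1) * x ^ m - μ * x ^ (m+2)) * exp (-(μ/2) * x ^ 2)) x := by
    intro x _
    have h1 : HasDerivAt (fun r : ℝ => r ^ (m+1)) (((m:ℝ)+1) * x ^ m) x := by
      simpa using hasDerivAt_pow (m+1) x
    have h3 : HasDerivAt (fun r : ℝ => -(μ/2) * r ^ 2) (-(μ/2) * (2 * x)) x := by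
      simpa [mul_comm] using (hasDerivAt_pow 2 x).const_mul (-(μ/2))
    have h2 := h3.exp
    have h : HasDerivAt (fun r : ℝ => r ^ (m+1) * exp (-(μ/2) * r ^ 2)) _ x := h1.mul h2
    convert h using 1
    ring
  have f'int : IntegrableOn (fun x : ℝ =>
      (((m:ℝ)+1) * x ^ m - μ * x ^ (m+2)) * exp (-(μ/2) * x ^ 2)) (Ioi 0) := by
    have hb : (0:ℝ) < μ/2 := by positivity
    have h := ((integrableOn_pow_exp m hb).const_mul ((m:ℝ)+1)).sub
      ((integrableOn_pow_exp (m+2) hb).const_mul μ)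
    exact h.congr (Filter.Eventually.of_forall fun x => by simp only [Pi.sub_apply]; ring)
  have htend : Tendsto (fun r : ℝ => r ^ (m+1) * exp (-(μ/2) * r ^ 2)) atTop (nhds 0) := by
    have hlit := rpow_mul_exp_neg_mul_sq_isLittleO_exp_neg (b := μ/2) (by positivity) ((m:ℝ)+1)
    have htl : Tendsto (fun x : ℝ => exp (-(1/2) * x)) atTop (nhds 0) := by
      have := Real.tendsto_exp_neg_atTop_nhds_zero.comp
        (tendsto_id.const_mul_atTop (by norm_num : (0:ℝ) < 1/2))
      simpa [Function.comp_def, neg_mul] using this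
    have h0 := hlit.isBigO.trans_tendsto htl
    refine h0.congr (fun x => ?_)
    rw [show ((m:ℝ)+1) = ((m+1 : ℕ) : ℝ) by push_cast; ring, Real.rpow_natCast]
  have key := integral_Ioi_of_hasDerivAt_of_tendsto' hderiv f'int htend
  simp only [zero_pow (Nat.succ_ne_zero m), zero_mul, sub_zero] at key
  rw [Nat.add_sub_cancel]
  push_cast
  convert key using 2

lemma oneDim (d : ℕ) (hd : 1 ≤ d) {μ : ℝ} (hμ : 0 < μ) (w : ℝ → ℝ) (hw : Continuous w)
    (hconv : ConvexOn ℝ Set.univ (fun r => w r - μ / 2 * r ^ 2))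
    (hmin : ∀ r, w 0 ≤ w r)
    (hgrow : ∀ r : ℝ, w 0 + μ / 2 * r ^ 2 ≤ w r) :
    ∫ r in Ioi (0:ℝ), r ^ (d+1) * exp (-(w r)) ≤
      ((d:ℝ)/μ) * ∫ r in Ioi (0:ℝ), r ^ (d-1) * exp (-(w r)) := by
  obtain ⟨m, rfl⟩ : ∃ m, d = m + 1 := ⟨d - 1, (Nat.succ_pred_eq_of_pos hd).symm⟩
  have hdm1 : (m + 1) - 1 = m := by omega
  rw [hdm1]
  have hdpos : (0:ℝ) < ((m:ℝ)+1) := by positivity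
  have hquot : (0:ℝ) < ((m+1:ℕ):ℝ)/μ := by positivity
  set t₀ : ℝ := Real.sqrt (((m+1:ℕ):ℝ)/μ) with ht₀
  have ht₀pos : 0 < t₀ := Real.sqrt_pos.2 hquot
  have ht₀sq : t₀ ^ 2 = ((m+1:ℕ):ℝ)/μ := Real.sq_sqrt hquot.le
  set H : ℝ → ℝ := fun r => exp (-(w r - μ / 2 * r ^ 2)) with hH
  have hHmono : ∀ s t : ℝ, 0 < s → s ≤ t → H t ≤ H s := fun s t hs hst =>
    Real.exp_le_exp.2 (neg_le_neg (psi_mono μ hμ w hconv hmin hs hst))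
  have hexp : ∀ r : ℝ, exp (-(w r)) = exp (-(μ/2) * r ^ 2) * H r := by
    intro r
    rw [hH, ← Real.exp_add]
    congr 1
    ring
  -- the Gaussian identity
  have h0 : ∫ r in Ioi (0:ℝ), ((((m+1:ℕ):ℝ)/μ) * r ^ m - r ^ (m+2)) * exp (-(μ/2) * r ^ 2) = 0 := by
    have hg := gauss_moment (m+1) (Nat.le_add_left 1 m) hμ
    rw [hdm1] at hg
    have h2 : ∀ r : ℝ, ((((m+1:ℕ):ℝ)/μ) * r ^ m - r ^ (m+2)) * exp (-(μ/2) * r ^ 2)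
        = (1/μ) * ((((m+1:ℕ):ℝ) * r ^ m - μ * r ^ (m+1+1)) * exp (-(μ/2) * r ^ 2)) := by
      intro r; field_simp
    simp_rw [h2]
    rw [integral_const_mul, hg, mul_zero]
  -- integrability
  have hb2 : (0:ℝ) < μ/2 := by positivity
  have If : IntegrableOn (fun r : ℝ =>
      H t₀ * (((((m+1:ℕ):ℝ)/μ) * r ^ m - r ^ (m+2)) * exp (-(μ/2) * r ^ 2))) (Ioi 0) := by
    have h := (((integrableOn_pow_exp m hb2).const_mul (((m+1:ℕ):ℝ)/μ)).sub
      (integrableOn_pow_exp (m+2) hb2)).const_mul (H t₀)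
    exact h.congr (Filter.Eventually.of_forall fun r => by simp only [Pi.sub_apply]; ring)
  have Ig1 : IntegrableOn (fun r : ℝ => r ^ m * exp (-(w r))) (Ioi 0) :=
    oneDim_integrable m hμ w hw hgrow
  have Ig2 : IntegrableOn (fun r : ℝ => r ^ (m+2) * exp (-(w r))) (Ioi 0) :=
    oneDim_integrable (m+2) hμ w hw hgrow
  have Ig : IntegrableOn (fun r : ℝ =>
      (((m+1:ℕ):ℝ)/μ) * (r ^ m * exp (-(w r))) - r ^ (m+2) * exp (-(w r))) (Ioi 0) := by
    have h := (Ig1.const_mul (((m+1:ℕ):ℝ)/μ)).sub Ig2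
    exact h.congr (Filter.Eventually.of_forall fun r => by simp only [Pi.sub_apply])
  -- pointwise comparison
  have hpt : ∀ r ∈ Ioi (0:ℝ),
      H t₀ * (((((m+1:ℕ):ℝ)/μ) * r ^ m - r ^ (m+2)) * exp (-(μ/2) * r ^ 2))
        ≤ (((m+1:ℕ):ℝ)/μ) * (r ^ m * exp (-(w r))) - r ^ (m+2) * exp (-(w r)) := by
    intro r hr
    have hrpos : (0:ℝ) < r := hr
    have hrhs : (((m+1:ℕ):ℝ)/μ) * (r ^ m * exp (-(w r))) - r ^ (m+2) * exp (-(w r))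
        = ((((m+1:ℕ):ℝ)/μ) * r ^ m - r ^ (m+2)) * exp (-(μ/2) * r ^ 2) * H r := by
      rw [hexp r]; ring
    rw [hrhs]
    set c : ℝ := ((((m+1:ℕ):ℝ)/μ) * r ^ m - r ^ (m+2)) * exp (-(μ/2) * r ^ 2) with hc
    have hcsign : c = r ^ m * (((m+1:ℕ):ℝ)/μ - r ^ 2) * exp (-(μ/2) * r ^ 2) := by
      rw [hc]; ring
    rw [mul_comm (H t₀) c]
    rcases le_total r t₀ with hrt | hrt
    · have hc0 : 0 ≤ c := by
        rw [hcsign]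
        have : r ^ 2 ≤ t₀ ^ 2 := pow_le_pow_left₀ hrpos.le hrt 2
        rw [ht₀sq] at this
        have h1 : (0:ℝ) ≤ ((m+1:ℕ):ℝ)/μ - r ^ 2 := by linarith
        positivity
      exact mul_le_mul_of_nonneg_left (hHmono r t₀ hrpos hrt) hc0
    · have hc0 : c ≤ 0 := by
        rw [hcsign]
        have : t₀ ^ 2 ≤ r ^ 2 := pow_le_pow_left₀ ht₀pos.le hrt 2
        rw [ht₀sq] at this
        have h1 : ((m+1:ℕ):ℝ)/μ - r ^ 2 ≤ 0 := by linarith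
        have h2 : (0:ℝ) ≤ r ^ m := by positivity
        have h3 : (0:ℝ) < exp (-(μ/2) * r ^ 2) := Real.exp_pos _
        nlinarith [mul_nonpos_of_nonneg_of_nonpos h2 h1]
      exact mul_le_mul_of_nonpos_left (hHmono t₀ r ht₀pos hrt) hc0
  -- integrate
  have hineq := MeasureTheory.setIntegral_mono_on If Ig measurableSet_Ioi hpt
  have hfval : ∫ r in Ioi (0:ℝ),
      H t₀ * (((((m+1:ℕ):ℝ)/μ) * r ^ m - r ^ (m+2)) * exp (-(μ/2) * r ^ 2)) = 0 := by
    rw [integral_const_mul, h0, mul_zero]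
  rw [hfval] at hineq
  have hsplit : ∫ r in Ioi (0:ℝ),
      ((((m+1:ℕ):ℝ)/μ) * (r ^ m * exp (-(w r))) - r ^ (m+2) * exp (-(w r)))
      = (((m+1:ℕ):ℝ)/μ) * (∫ r in Ioi (0:ℝ), r ^ m * exp (-(w r)))
        - ∫ r in Ioi (0:ℝ), r ^ (m+2) * exp (-(w r)) := by
    rw [MeasureTheory.integral_sub (Ig1.const_mul _) Ig2, integral_const_mul]
  rw [hsplit] at hineq
  have : (m+1)+1 = m+2 := rfl
  rw [this]
  linarith

section Polar
open Module

variable {F : Type*} [NormedAddCommGroup F] [NormedSpace ℝ F] [MeasurableSpace F] [BorelSpace F]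
  [FiniteDimensional ℝ F] [Nontrivial F] (μvol : Measure F) [μvol.IsAddHaarMeasure]

lemma integral_volumeIoiPow (n : ℕ) (g : ℝ → ℝ) :
    ∫ r : Ioi (0:ℝ), g (r:ℝ) ∂(Measure.volumeIoiPow n) = ∫ r in Ioi (0:ℝ), r ^ n * g r := by
  simp only [Measure.volumeIoiPow, ENNReal.ofReal]
  rw [integral_withDensity_eq_integral_smul
    ((measurable_subtype_coe.pow_const _).real_toNNReal),
    integral_subtype_comap measurableSet_Ioi (fun a : ℝ => (a ^ n).toNNReal • g a)]
  refine setIntegral_congr_fun measurableSet_Ioi fun x hx => ?_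
  rw [NNReal.smul_def, Real.coe_toNNReal _ (pow_nonneg (le_of_lt hx) _), smul_eq_mul]

lemma prod_integrable (G : F → ℝ) (hG : Integrable G μvol) :
    Integrable (fun p : sphere (0:F) 1 × Ioi (0:ℝ) => G ((p.2 : ℝ) • (p.1 : F)))
      (μvol.toSphere.prod (Measure.volumeIoiPow (Module.finrank ℝ F - 1))) := by
  have hMP := μvol.measurePreserving_homeomorphUnitSphereProd
  rw [← hMP.integrable_comp_emb (Homeomorph.measurableEmbedding _)]
  have hmeas : MeasurableSet ({0}ᶜ : Set F) := (measurableSet_singleton 0).compl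
  have hfun : (fun p : sphere (0:F) 1 × Ioi (0:ℝ) => G ((p.2:ℝ) • (p.1:F)))
      ∘ (homeomorphUnitSphereProd F) = fun x : ({0}ᶜ : Set F) => G x := by
    funext x
    simp only [Function.comp_apply, homeomorphUnitSphereProd_apply_snd_coe,
      homeomorphUnitSphereProd_apply_fst_coe]
    rw [smul_inv_smul₀ (norm_ne_zero_iff.2 x.2)]
  rw [hfun]
  have h2 : Integrable G (Measure.map (Subtype.val : ({0}ᶜ : Set F) → F)
      (μvol.comap Subtype.val)) := by
    rw [map_comap_subtype_coe hmeas]; exact hG.restrict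
  exact ((MeasurableEmbedding.subtype_coe hmeas).integrable_map_iff).1 h2

lemma polar_eq (G : F → ℝ) (hG : Integrable G μvol) :
    ∫ x, G x ∂μvol = ∫ u : sphere (0:F) 1,
      (∫ r in Ioi (0:ℝ), r ^ (Module.finrank ℝ F - 1) * G (r • (u : F))) ∂μvol.toSphere := by
  have hMP := μvol.measurePreserving_homeomorphUnitSphereProd
  have hmeas : MeasurableSet ({0}ᶜ : Set F) := (measurableSet_singleton 0).compl
  calc ∫ x, G x ∂μvol = ∫ x : ({0}ᶜ : Set F), G x ∂(μvol.comap Subtype.val) := by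
        rw [integral_subtype_comap hmeas, restrict_compl_singleton (μ := μvol)]
    _ = ∫ p : sphere (0:F) 1 × Ioi (0:ℝ), G ((p.2:ℝ) • (p.1:F))
          ∂(μvol.toSphere.prod (Measure.volumeIoiPow (Module.finrank ℝ F - 1))) := by
        rw [← hMP.integral_comp (Homeomorph.measurableEmbedding _)]
        refine integral_congr_ae (Filter.Eventually.of_forall fun x => ?_)
        simp only [homeomorphUnitSphereProd_apply_snd_coe,
          homeomorphUnitSphereProd_apply_fst_coe]
        rw [smul_inv_smul₀ (norm_ne_zero_iff.2 x.2)]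
    _ = ∫ u : sphere (0:F) 1, (∫ r : Ioi (0:ℝ), G ((r:ℝ) • (u:F))
          ∂(Measure.volumeIoiPow (Module.finrank ℝ F - 1))) ∂μvol.toSphere :=
        integral_prod _ (prod_integrable μvol G hG)
    _ = _ := by
        refine integral_congr_ae (Filter.Eventually.of_forall fun u => ?_)
        exact integral_volumeIoiPow (Module.finrank ℝ F - 1) (fun r => G (r • (u:F)))

lemma polar_integrable_section (G : F → ℝ) (hG : Integrable G μvol) :
    Integrable (fun u : sphere (0:F) 1 =>
      ∫ r in Ioi (0:ℝ), r ^ (Module.finrank ℝ F - 1) * G (r • (u : F))) μvol.toSphere := by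
  have h := (prod_integrable μvol G hG).integral_prod_left
  exact h.congr (Filter.Eventually.of_forall fun u =>
    integral_volumeIoiPow (Module.finrank ℝ F - 1) (fun r => G (r • (u:F))))

end Polar

/-- Moment bound for strongly log-concave measures: if V is continuous,
μ-strongly convex with global minimizer x*, and π ∝ exp(−V), then
∫ ‖x − x*‖² dπ(x) ≤ d/μ, i.e. W₂(δ_{x*}, π) ≤ √(d/μ). Stated in unnormalised
form: ∫ ‖x − x*‖² exp(−V x) dx ≤ (d/μ) ∫ exp(−V x) dx. -/
theorem stmt5 (d : ℕ) (μ : ℝ) (hμ : 0 < μ)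
    (V : EuclideanSpace ℝ (Fin d) → ℝ) (hVcont : Continuous V)
    (hVconv : ConvexOn ℝ Set.univ
      (fun x : EuclideanSpace ℝ (Fin d) => V x - μ / 2 * ‖x‖ ^ 2))
    (xstar : EuclideanSpace ℝ (Fin d)) (hmin : ∀ x, V xstar ≤ V x) :
    (∫ x : EuclideanSpace ℝ (Fin d), ‖x - xstar‖ ^ 2 * Real.exp (-(V x)))
      ≤ ((d : ℝ) / μ) * ∫ x : EuclideanSpace ℝ (Fin d), Real.exp (-(V x)) := by
  rcases Nat.eq_zero_or_pos d with rfl | hd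
  · -- dimension zero
    haveI : Subsingleton (EuclideanSpace ℝ (Fin 0)) :=
      ⟨fun a b => by ext i; exact i.elim0⟩
    have hzero : ∀ x : EuclideanSpace ℝ (Fin 0), ‖x - xstar‖ ^ 2 * Real.exp (-(V x)) = 0 := by
      intro x
      rw [Subsingleton.elim x xstar]
      simp
    rw [integral_congr_ae (Filter.Eventually.of_forall hzero)]
    simp
  -- main case
  haveI : Nontrivial (EuclideanSpace ℝ (Fin d)) :=
    Module.nontrivial_of_finrank_pos (R := ℝ) (by rw [finrank_euclideanSpace_fin]; omega)
  set W : EuclideanSpace ℝ (Fin d) → ℝ := fun y => V (xstar + y) with hW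
  have hW0 : W 0 = V xstar := by simp [hW]
  have hWcont : Continuous W := hVcont.comp (continuous_const.add continuous_id)
  have hWmin : ∀ y, W 0 ≤ W y := fun y => by rw [hW0]; exact hmin _
  have hVstrong : StrongConvexOn Set.univ μ V := strongConvexOn_iff_convex.mpr hVconv
  have hWstrong : StrongConvexOn Set.univ μ W := by
    refine ⟨convex_univ, fun x _ y _ a b ha hb hab => ?_⟩
    have h := hVstrong.2 (mem_univ (xstar + x)) (mem_univ (xstar + y)) ha hb hab
    have e1 : a • (xstar + x) + b • (xstar + y) = xstar + (a • x + b • y) := by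
      rw [smul_add, smul_add]
      rw [show a • xstar + a • x + (b • xstar + b • y)
          = (a • xstar + b • xstar) + (a • x + b • y) by abel]
      rw [← add_smul, hab, one_smul]
    have e2 : (xstar + x) - (xstar + y) = x - y := by abel
    rw [e1, e2] at h
    exact h
  -- quadratic growth
  have hgrowW : ∀ y, W 0 + μ / 2 * ‖y‖ ^ 2 ≤ W y := by
    intro y
    have key : ∀ lam : ℝ, lam ∈ Ioo (0:ℝ) 1 → W 0 + μ / 2 * ((1 - lam) * ‖y‖ ^ 2) ≤ W y := by
      intro lam hlam
      have h := hWstrong.2 (mem_univ (0 : EuclideanSpace ℝ (Fin d))) (mem_univ y)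
        (by linarith [hlam.1, hlam.2] : (0:ℝ) ≤ 1 - lam) hlam.1.le (by ring)
      rw [smul_zero, zero_add, zero_sub, norm_neg] at h
      have hmin' := hWmin (lam • y)
      have hs : (1 - lam) • W 0 + lam • W y - (1 - lam) * lam * (μ / 2 * ‖y‖ ^ 2) ≥ W 0 := by
        calc (1 - lam) • W 0 + lam • W y - (1 - lam) * lam * (μ / 2 * ‖y‖ ^ 2) ≥ W (lam • y) := h
        _ ≥ W 0 := hmin'
      simp only [smul_eq_mul] at hs
      nlinarith [hlam.1, hlam.2]
    have hlim : Tendsto (fun lam : ℝ => W 0 + μ / 2 * ((1 - lam) * ‖y‖ ^ 2))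
        (nhdsWithin 0 (Ioi 0)) (nhds (W 0 + μ / 2 * ‖y‖ ^ 2)) := by
      have hc : Continuous (fun lam : ℝ => W 0 + μ / 2 * ((1 - lam) * ‖y‖ ^ 2)) := by continuity
      have := hc.tendsto 0
      simp only [sub_zero, one_mul] at this
      exact this.mono_left nhdsWithin_le_nhds
    refine le_of_tendsto hlim ?_
    filter_upwards [Ioo_mem_nhdsGT_of_mem (Set.mem_Ico.mpr ⟨le_refl (0:ℝ), one_pos⟩)] with
      lam hlam
    exact key lam hlam
  -- integrability on E
  have gaussInt : ∀ b : ℝ, 0 < b →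
      Integrable (fun y : EuclideanSpace ℝ (Fin d) => Real.exp (-b * ‖y‖ ^ 2)) := by
    intro b hb
    have h := GaussianFourier.integrable_cexp_neg_mul_sq_norm_add_of_euclideanSpace
      (ι := Fin d) (b := (b:ℂ)) (by simpa using hb) 0 0
    have h2 := h.norm
    refine h2.congr (Filter.Eventually.of_forall fun y => ?_)
    simp only [zero_mul, add_zero]
    rw [Complex.norm_exp]
    congr 1
    have h3 : (-(b:ℂ) * (‖y‖:ℂ) ^ 2) = (((-b * ‖y‖ ^ 2 : ℝ)) : ℂ) := by push_cast; ring
    rw [h3, Complex.ofReal_re]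
  have I1 : Integrable (fun y : EuclideanSpace ℝ (Fin d) => Real.exp (-(W y))) := by
    refine ((gaussInt (μ/2) (by positivity)).const_mul (Real.exp (-(W 0)))).mono'
      (hWcont.neg.rexp.aestronglyMeasurable) ?_
    refine Filter.Eventually.of_forall fun y => ?_
    rw [Real.norm_eq_abs, abs_of_pos (Real.exp_pos _), ← Real.exp_add]
    exact Real.exp_le_exp.2 (by linarith [hgrowW y])
  have I2 : Integrable (fun y : EuclideanSpace ℝ (Fin d) => ‖y‖ ^ 2 * Real.exp (-(W y))) := by
    have hmaj : Integrable (fun y : EuclideanSpace ℝ (Fin d) =>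
        (Real.exp (-(W 0)) * (4/μ)) * Real.exp (-(μ/4) * ‖y‖ ^ 2)) :=
      (gaussInt (μ/4) (by positivity)).const_mul _
    refine hmaj.mono' ?_ ?_
    · exact ((continuous_norm.pow 2).mul hWcont.neg.rexp).aestronglyMeasurable
    · refine Filter.Eventually.of_forall fun y => ?_
      have h1 : Real.exp (-(W y)) ≤ Real.exp (-(W 0)) * Real.exp (-(μ/2) * ‖y‖ ^ 2) := by
        rw [← Real.exp_add]
        exact Real.exp_le_exp.2 (by linarith [hgrowW y])
      have h2 : ‖y‖ ^ 2 * Real.exp (-(μ/4) * ‖y‖ ^ 2) ≤ 4/μ := by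
        have hx := Real.add_one_le_exp (μ/4 * ‖y‖ ^ 2)
        have hexp : μ/4 * ‖y‖ ^ 2 ≤ Real.exp (μ/4 * ‖y‖ ^ 2) := by linarith
        rw [show -(μ/4) * ‖y‖ ^ 2 = -(μ/4 * ‖y‖ ^ 2) by ring, Real.exp_neg]
        rw [mul_inv_le_iff₀ (Real.exp_pos _)]
        calc ‖y‖ ^ 2 = (4/μ) * (μ/4 * ‖y‖ ^ 2) := by field_simp
        _ ≤ (4/μ) * Real.exp (μ/4 * ‖y‖ ^ 2) := by
            exact mul_le_mul_of_nonneg_left hexp (by positivity)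
      have h3 : (0:ℝ) ≤ ‖y‖ ^ 2 := by positivity
      rw [Real.norm_eq_abs, abs_of_nonneg (by positivity)]
      calc ‖y‖ ^ 2 * Real.exp (-(W y))
          ≤ ‖y‖ ^ 2 * (Real.exp (-(W 0)) * Real.exp (-(μ/2) * ‖y‖ ^ 2)) :=
            mul_le_mul_of_nonneg_left h1 h3
      _ = Real.exp (-(W 0)) * (‖y‖ ^ 2 * Real.exp (-(μ/4) * ‖y‖ ^ 2))
            * Real.exp (-(μ/4) * ‖y‖ ^ 2) := by
          rw [show (-(μ/2) * ‖y‖ ^ 2 : ℝ) = (-(μ/4) * ‖y‖ ^ 2) + (-(μ/4) * ‖y‖ ^ 2) by ring,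
            Real.exp_add]
          ring
      _ ≤ Real.exp (-(W 0)) * (4/μ) * Real.exp (-(μ/4) * ‖y‖ ^ 2) := by
          have := mul_le_mul_of_nonneg_left h2 (Real.exp_pos (-(W 0))).le
          have h4 : (0:ℝ) ≤ Real.exp (-(μ/4) * ‖y‖ ^ 2) := (Real.exp_pos _).le
          nlinarith [Real.exp_pos (-(W 0))]
  -- translation
  have hT2 : (∫ x : EuclideanSpace ℝ (Fin d), ‖x - xstar‖ ^ 2 * Real.exp (-(V x)))
      = ∫ y : EuclideanSpace ℝ (Fin d), ‖y‖ ^ 2 * Real.exp (-(W y)) := by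
    rw [← integral_add_left_eq_self
      (fun x : EuclideanSpace ℝ (Fin d) => ‖x - xstar‖ ^ 2 * Real.exp (-(V x))) xstar]
    refine integral_congr_ae (Filter.Eventually.of_forall fun y => ?_)
    simp [hW, add_sub_cancel_left]
  have hT1 : (∫ x : EuclideanSpace ℝ (Fin d), Real.exp (-(V x)))
      = ∫ y : EuclideanSpace ℝ (Fin d), Real.exp (-(W y)) := by
    rw [← integral_add_left_eq_self
      (fun x : EuclideanSpace ℝ (Fin d) => Real.exp (-(V x))) xstar]
  rw [hT1, hT2]
  -- polar coordinates
  have hdim : Module.finrank ℝ (EuclideanSpace ℝ (Fin d)) - 1 = d - 1 := by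
    rw [finrank_euclideanSpace_fin]
  have hp2 := polar_eq (volume : Measure (EuclideanSpace ℝ (Fin d)))
    (fun y => ‖y‖ ^ 2 * Real.exp (-(W y))) I2
  have hp1 := polar_eq (volume : Measure (EuclideanSpace ℝ (Fin d)))
    (fun y => Real.exp (-(W y))) I1
  have hs2 := polar_integrable_section (volume : Measure (EuclideanSpace ℝ (Fin d)))
    (fun y => ‖y‖ ^ 2 * Real.exp (-(W y))) I2
  have hs1 := polar_integrable_section (volume : Measure (EuclideanSpace ℝ (Fin d)))
    (fun y => Real.exp (-(W y))) I1
  rw [hdim] at hp1 hp2 hs1 hs2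
  rw [hp1, hp2]
  -- pointwise comparison on the sphere
  have hptu : ∀ u : sphere (0 : EuclideanSpace ℝ (Fin d)) 1,
      (∫ r in Ioi (0:ℝ), r ^ (d-1) * (‖r • (u : EuclideanSpace ℝ (Fin d))‖ ^ 2
          * Real.exp (-(W (r • (u : EuclideanSpace ℝ (Fin d)))))))
        ≤ ((d:ℝ)/μ) * ∫ r in Ioi (0:ℝ),
            r ^ (d-1) * Real.exp (-(W (r • (u : EuclideanSpace ℝ (Fin d))))) := by
    intro u
    have hu1 : ‖(u : EuclideanSpace ℝ (Fin d))‖ = 1 := mem_sphere_zero_iff_norm.1 u.2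
    set w : ℝ → ℝ := fun r => W (r • (u : EuclideanSpace ℝ (Fin d))) with hwdef
    have hw0 : w 0 = W 0 := by simp [hwdef]
    have hwcont : Continuous w := hWcont.comp (continuous_id.smul continuous_const)
    have hwmin : ∀ r, w 0 ≤ w r := fun r => by rw [hw0]; exact hWmin _
    have hnorm : ∀ r : ℝ, ‖r • (u : EuclideanSpace ℝ (Fin d))‖ ^ 2 = r ^ 2 := by
      intro r
      rw [norm_smul, hu1, mul_one, Real.norm_eq_abs, sq_abs]
    have hwgrow : ∀ r : ℝ, w 0 + μ / 2 * r ^ 2 ≤ w r := by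
      intro r
      have := hgrowW (r • (u : EuclideanSpace ℝ (Fin d)))
      rw [hnorm r] at this
      rw [hw0]
      exact this
    have hwstrong : StrongConvexOn Set.univ μ w := by
      refine ⟨convex_univ, fun x _ y _ a b ha hb hab => ?_⟩
      have h := hWstrong.2 (mem_univ (x • (u : EuclideanSpace ℝ (Fin d))))
        (mem_univ (y • (u : EuclideanSpace ℝ (Fin d)))) ha hb hab
      have e1 : a • (x • (u : EuclideanSpace ℝ (Fin d)))
          + b • (y • (u : EuclideanSpace ℝ (Fin d)))
          = (a • x + b • y) • (u : EuclideanSpace ℝ (Fin d)) := by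
        rw [smul_smul, smul_smul, add_smul]
        simp only [smul_eq_mul]
      have e2 : ‖x • (u : EuclideanSpace ℝ (Fin d)) - y • (u : EuclideanSpace ℝ (Fin d))‖
          = ‖x - y‖ := by
        rw [← sub_smul, norm_smul, hu1, mul_one]
      rw [e1, e2] at h
      exact h
    have hwconv : ConvexOn ℝ Set.univ (fun r => w r - μ / 2 * r ^ 2) := by
      have h := strongConvexOn_iff_convex.mp hwstrong
      have e : (fun r : ℝ => w r - μ / 2 * ‖r‖ ^ 2) = fun r => w r - μ / 2 * r ^ 2 := by
        funext r
        rw [Real.norm_eq_abs, sq_abs]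
      rw [e] at h
      exact h
    have hcongr : ∀ r ∈ Ioi (0:ℝ),
        r ^ (d-1) * (‖r • (u : EuclideanSpace ℝ (Fin d))‖ ^ 2 * Real.exp (-(w r)))
        = r ^ (d+1) * Real.exp (-(w r)) := by
      intro r hr
      rw [hnorm r, show r ^ (d-1) * (r ^ 2 * Real.exp (-(w r)))
          = r ^ (d-1) * r ^ 2 * Real.exp (-(w r)) by ring, ← pow_add]
      congr 2
      omega
    rw [setIntegral_congr_fun measurableSet_Ioi hcongr]
    exact oneDim d hd hμ w hwcont hwconv hwmin hwgrow
  calc ∫ u : sphere (0 : EuclideanSpace ℝ (Fin d)) 1,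
        (∫ r in Ioi (0:ℝ), r ^ (d-1) * (‖r • (u : EuclideanSpace ℝ (Fin d))‖ ^ 2
          * Real.exp (-(W (r • (u : EuclideanSpace ℝ (Fin d)))))))
        ∂(volume : Measure (EuclideanSpace ℝ (Fin d))).toSphere
      ≤ ∫ u : sphere (0 : EuclideanSpace ℝ (Fin d)) 1,
        (((d:ℝ)/μ) * ∫ r in Ioi (0:ℝ),
          r ^ (d-1) * Real.exp (-(W (r • (u : EuclideanSpace ℝ (Fin d))))))
        ∂(volume : Measure (EuclideanSpace ℝ (Fin d))).toSphere := by
        exact integral_mono hs2 (hs1.const_mul _) hptu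
    _ = ((d:ℝ)/μ) * ∫ u : sphere (0 : EuclideanSpace ℝ (Fin d)) 1,
        (∫ r in Ioi (0:ℝ), r ^ (d-1) * Real.exp (-(W (r • (u : EuclideanSpace ℝ (Fin d))))))
        ∂(volume : Measure (EuclideanSpace ℝ (Fin d))).toSphere := integral_const_mul _ _
end

section
/- Let (x_k)_{k≥0} be a sequence of nonnegative real numbers, and let A ∈ (0, 1), B > 0, C ≥ 0 be constants such that for every k ≥ 0, x_{k+1}² ≤ ((1 − A)·x_k + C)² + B². Then for every K ≥ 0, x_K ≤ (1 − A)^K · x_0 + C/A + B²/(C + √A · B). -/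
open Real

/-- Recursion lemma (Lemma 1 of Dalalyan 2019): if x_{k+1}² ≤ ((1−A)x_k + C)² + B²
with A ∈ (0,1), B > 0, C ≥ 0 and x_k ≥ 0, then
x_K ≤ (1−A)^K x_0 + C/A + B²/(C + √A·B). -/
theorem stmt8 (x : ℕ → ℝ) (hx : ∀ k, 0 ≤ x k)
    (A B C : ℝ) (hA0 : 0 < A) (hA1 : A < 1) (hB : 0 < B) (hC : 0 ≤ C)
    (hrec : ∀ k, (x (k + 1)) ^ 2 ≤ ((1 - A) * x k + C) ^ 2 + B ^ 2) :
    ∀ K : ℕ, x K ≤ (1 - A) ^ K * x 0 + C / A + B ^ 2 / (C + Real.sqrt A * B) := by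
  have h1A : (0:ℝ) ≤ 1 - A := by linarith
  set s := Real.sqrt A with hs
  have hs2 : s ^ 2 = A := Real.sq_sqrt hA0.le
  have hspos : 0 < s := Real.sqrt_pos.2 hA0
  have hden : 0 < C + s * B := by positivity
  set D := C / A + B ^ 2 / (C + s * B) with hD
  have hDpos : 0 < D := by positivity
  suffices h : ∀ K : ℕ, x K ≤ (1 - A) ^ K * x 0 + D by
    intro K
    have := h K
    rw [hD] at this
    linarith
  have hd0 : 0 ≤ A * D - C := by
    rw [hD, mul_add, mul_div_cancel₀ _ hA0.ne']
    have : 0 ≤ A * (B ^ 2 / (C + s * B)) := by positivity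
    linarith
  have h1 : B ^ 2 ≤ (A * D - C) * (2 * D - (A * D - C)) := by
    rw [hD, ← sub_nonneg]
    have h2 : (A * (C / A + B ^ 2 / (C + s * B)) - C) * (2 * (C / A + B ^ 2 / (C + s * B)) - (A * (C / A + B ^ 2 / (C + s * B)) - C)) - B ^ 2
        = B ^ 2 * (C ^ 2 + A * (1 - A) * B ^ 2) / (C + s * B) ^ 2 := by
      field_simp
      rw [← hs2]
      ring
    rw [h2]
    have hnum : 0 ≤ C ^ 2 + A * (1 - A) * B ^ 2 := by positivity
    positivity
  have key : ∀ t : ℝ, 0 ≤ t → (t + (1 - A) * D + C) ^ 2 + B ^ 2 ≤ (t + D) ^ 2 := by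
    intro t ht
    nlinarith [h1, hd0, ht, mul_nonneg ht hd0]
  intro K
  induction K with
  | zero => simp; linarith [hDpos]
  | succ k ih =>
    have hp : (0:ℝ) ≤ (1 - A) ^ k := pow_nonneg h1A k
    have hp' : (0:ℝ) ≤ (1 - A) ^ (k+1) := pow_nonneg h1A (k+1)
    have hy : 0 ≤ (1 - A) ^ k * x 0 + D := by
      have := mul_nonneg hp (hx 0); linarith
    have hmon : 0 ≤ (1 - A) * x k + C := by
      have := hx k; nlinarith
    have h3 : ((1 - A) * x k + C) ^ 2 ≤ ((1 - A) * ((1 - A) ^ k * x 0 + D) + C) ^ 2 := by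
      apply pow_le_pow_left₀ hmon
      nlinarith [ih]
    have h4 : (x (k + 1)) ^ 2 ≤ ((1 - A) ^ (k + 1) * x 0 + D) ^ 2 := by
      have hk := key ((1 - A) ^ (k + 1) * x 0) (mul_nonneg hp' (hx 0))
      have heq : (1 - A) * ((1 - A) ^ k * x 0 + D) + C = (1 - A) ^ (k + 1) * x 0 + (1 - A) * D + C := by ring
      calc (x (k+1))^2 ≤ ((1 - A) * x k + C) ^ 2 + B ^ 2 := hrec k
        _ ≤ ((1 - A) * ((1 - A) ^ k * x 0 + D) + C) ^ 2 + B ^ 2 := by linarith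
        _ ≤ ((1 - A) ^ (k + 1) * x 0 + D) ^ 2 := by rw [heq]; exact hk
    have hpos : 0 ≤ (1 - A) ^ (k + 1) * x 0 + D := by
      have := mul_nonneg hp' (hx 0); linarith
    nlinarith [hx (k + 1), h4, hpos]
end
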